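/- Let G be a finite simple graph with vertex set V and edge set E, and let k be a positive integer. The set of common zeros in ℂ^V of the k-coloring polynomial system of G over ℂ is finite, and its cardinality equals the number of proper k-colorings of G, i.e., the number of functions c : V → {1,…,k} with c(u) ≠ c(v) for every edge {u,v} ∈ E. -/

import Mathlib

/-- The set of common zeros in `ℂ^V` of the `k`-coloring polynomial system
of a finite simple graph `G` is finite, and its cardinality equals the number of proper
`k`-colorings of `G`, i.e. the number of functions `c : V → Fin k` with `c u ≠ c v` for
every edge `{u,v}`. -/
theorem card_common_zeros_eq_card_proper_colorings
    {V : Type*} [Fintype V] (G : SimpleGraph V) (k : ℕ) (hk : 0 < k) :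
    ({a : V → ℂ |
        (∀ v : V, a v ^ k - 1 = 0) ∧
        (∀ u v : V, G.Adj u v →
          (∑ t ∈ Finset.range k, a u ^ t * a v ^ (k - 1 - t)) = 0)}).Finite ∧
    ({a : V → ℂ |
        (∀ v : V, a v ^ k - 1 = 0) ∧
        (∀ u v : V, G.Adj u v →
          (∑ t ∈ Finset.range k, a u ^ t * a v ^ (k - 1 - t)) = 0)}).ncard =
      Nat.card {c : V → Fin k // ∀ u v : V, G.Adj u v → c u ≠ c v} := by
  have : NeZero k := ⟨hk.ne'⟩
  obtain ⟨ζ, hζ⟩ : ∃ ζ : ℂ, IsPrimitiveRoot ζ k :=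
    ⟨_, Complex.isPrimitiveRoot_exp k hk.ne'⟩
  set S := {a : V → ℂ |
        (∀ v : V, a v ^ k - 1 = 0) ∧
        (∀ u v : V, G.Adj u v →
          (∑ t ∈ Finset.range k, a u ^ t * a v ^ (k - 1 - t)) = 0)} with hS
  -- characterize membership
  have hmem : ∀ a : V → ℂ, a ∈ S ↔
      (∀ v, a v ^ k = 1) ∧ ∀ u v, G.Adj u v → a u ≠ a v := by
    intro a
    constructor
    · rintro ⟨h1, h2⟩
      have hroot : ∀ v, a v ^ k = 1 := fun v => sub_eq_zero.mp (h1 v)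
      refine ⟨hroot, fun u v huv heq => ?_⟩
      have hz : a u ≠ 0 := fun h0 => by
        have := hroot u; rw [h0, zero_pow hk.ne'] at this; exact zero_ne_one this
      have hsum := h2 u v huv
      have : (∑ t ∈ Finset.range k, a u ^ t * a v ^ (k - 1 - t))
          = (k : ℂ) * a u ^ (k - 1) := by
        rw [Finset.sum_congr rfl (fun t ht => ?_), Finset.sum_const, Finset.card_range,
          nsmul_eq_mul]
        rw [← heq, ← pow_add]
        have := Finset.mem_range.mp ht
        congr 1
        omega
      rw [this] at hsum
      rcases mul_eq_zero.mp hsum with h | h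
      · exact (Nat.cast_ne_zero (R := ℂ)).mpr hk.ne' h
      · exact pow_ne_zero _ hz h
    · rintro ⟨h1, h2⟩
      refine ⟨fun v => sub_eq_zero.mpr (h1 v), fun u v huv => ?_⟩
      have := geom_sum₂_mul (a u) (a v) k
      rw [h1 u, h1 v, sub_self] at this
      rcases mul_eq_zero.mp this with h | h
      · exact h
      · exact absurd (sub_eq_zero.mp h) (h2 u v huv)
  -- the bijection
  let f : {c : V → Fin k // ∀ u v : V, G.Adj u v → c u ≠ c v} → S := fun c =>
    ⟨fun v => ζ ^ ((c.1 v : ℕ)), by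
      refine (hmem _).mpr ?_
      refine ⟨fun v => by rw [← pow_mul, mul_comm, pow_mul, hζ.pow_eq_one, one_pow],
        fun u v huv heq => ?_⟩
      exact c.2 u v huv (Fin.ext (hζ.pow_inj (c.1 u).2 (c.1 v).2 heq))⟩
  have hinj : Function.Injective f := by
    intro c c' h
    have h' := congrArg Subtype.val h
    ext v
    exact hζ.pow_inj (c.1 v).2 (c'.1 v).2 (congrFun h' v)
  have hsurj : Function.Surjective f := by
    rintro ⟨a, hamem⟩
    have ha := (hmem a).mp hamem
    choose i hi hpow using fun v => hζ.eq_pow_of_pow_eq_one (ha.1 v)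
    refine ⟨⟨fun v => ⟨i v, hi v⟩, fun u v huv heq => ?_⟩, ?_⟩
    · apply ha.2 u v huv
      rw [← hpow u, ← hpow v]
      exact congrArg (ζ ^ ·) (congrArg Fin.val heq)
    · exact Subtype.ext (funext fun v => hpow v)
  have hbij : Function.Bijective f := ⟨hinj, hsurj⟩
  have hfin : S.Finite := by
    rw [← Set.finite_coe_iff]
    exact Finite.of_surjective f hsurj
  refine ⟨hfin, ?_⟩
  rw [← Nat.card_coe_set_eq]
  exact (Nat.card_eq_of_bijective f hbij).symm
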